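/- Assume μ₀ ∈ 𝒦 and μ_θ = (θ ⊙ x)♯μ₀ for θ ∈ ℝ₊ᵈ. For any slicing schedule with directions parallel to the coordinate axes, the no-collision map between μ_θ and μ_{θ'} is the coordinatewise dilation t(x)_j = (θ'_j/θ_j) x_j μ_θ-a.e.; it coincides with the optimal transport map, and W_{𝒮,2}²(μ_θ, μ_{θ'}) = Σ_j c_j² (θ_j − θ'_j)² with c_j² = ∫ x_j² dμ₀. -/

import Mathlib

open MeasureTheory Real
open scoped ENNReal NNReal RealInnerProductSpace

variable {d : ℕ}

/-- A slicing schedule, assigning to each partition cell (indexed by the binary word of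
splitting decisions, most recent decision first) a unit direction along which it is
bisected. -/
structure Slicing (d : ℕ) where
  dir : List Bool → EuclideanSpace ℝ (Fin d)
  unit : ∀ b, ‖dir b‖ = 1

/-- The partition cells determined by a slicing schedule `S` and heights `h`:
`Ω_[] = ℝᵈ` and the cell `Ω_b` is bisected by the hyperplane `{x · s_b = h_b}`. -/
noncomputable def cell (S : Slicing d) (h : List Bool → ℝ) :
    List Bool → Set (EuclideanSpace ℝ (Fin d))
  | [] => Set.univ
  | (i :: b) => cell S h b ∩ {x | if i then h b < ⟪S.dir b, x⟫ else ⟪S.dir b, x⟫ ≤ h b}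

/-- `h` realizes median (equal-mass) bisections of every cell for `μ`. -/
def IsMedianHeights (S : Slicing d) (μ : Measure (EuclideanSpace ℝ (Fin d)))
    (h : List Bool → ℝ) : Prop :=
  ∀ b, μ (cell S h (false :: b)) = μ (cell S h (true :: b))

/-- The ternary label `Σ_α i_α/3^α` of a cell. -/
noncomputable def label : List Bool → ℝ
  | [] => 0
  | (i :: b) => label b + (if i then 1 else 0) / 3 ^ (b.length + 1)

open Classical in
/-- The address (index of the nested cell) of a point at depth `k`. -/
noncomputable def addr (S : Slicing d) (h : List Bool → ℝ)
    (x : EuclideanSpace ℝ (Fin d)) : ℕ → List Bool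
  | 0 => []
  | (k + 1) =>
    (if h (addr S h x k) < ⟪S.dir (addr S h x k), x⟫ then true else false) :: addr S h x k

/-- The limiting labeling function `ℓ^μ`. -/
noncomputable def ell (S : Slicing d) (h : List Bool → ℝ)
    (x : EuclideanSpace ℝ (Fin d)) : ℝ :=
  ⨆ k, label (addr S h x k)

/-- `t` is a no-collision map from `(μ, hμ)` to `(ν, hν)`: it pushes `μ` forward to `ν`
and maps each partition cell of `μ` into the corresponding cell of `ν` (μ-a.e.). -/
def IsNoCollisionMap (S : Slicing d) (hμ hν : List Bool → ℝ)
    (μ ν : Measure (EuclideanSpace ℝ (Fin d)))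
    (t : EuclideanSpace ℝ (Fin d) → EuclideanSpace ℝ (Fin d)) : Prop :=
  Measurable t ∧ μ.map t = ν ∧ ∀ b, ∀ᵐ x ∂μ, x ∈ cell S hμ b → t x ∈ cell S hν b

/-- The class `𝒦`: compactly supported absolutely continuous probability measures whose
density is bounded above and below on the support, with null boundary of support. -/
def MemK (μ : Measure (EuclideanSpace ℝ (Fin d))) : Prop :=
  IsProbabilityMeasure μ ∧ μ ≪ volume ∧
  ∃ K : Set (EuclideanSpace ℝ (Fin d)), IsCompact K ∧ μ Kᶜ = 0 ∧ μ (frontier K) = 0 ∧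
    ∃ c C : ℝ, 0 < c ∧
      ∀ᵐ x ∂(volume.restrict K),
        ENNReal.ofReal c ≤ μ.rnDeriv volume x ∧ μ.rnDeriv volume x ≤ ENNReal.ofReal C

/-- The finite initial branches of an infinite splitting sequence. -/
def branch (σ : ℕ → Bool) : ℕ → List Bool
  | 0 => []
  | (k + 1) => σ k :: branch σ k

/-- Coordinatewise (Hadamard) dilation `x ↦ θ ⊙ x`. -/
noncomputable def hadamard (θ : Fin d → ℝ) (x : EuclideanSpace ℝ (Fin d)) :
    EuclideanSpace ℝ (Fin d) :=
  WithLp.toLp 2 (fun i => θ i * x i)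

/-- `T` is an optimal transport map (for quadratic cost) pushing `μ` forward to `ν`. -/
def IsOptimalMap (μ ν : Measure (EuclideanSpace ℝ (Fin d)))
    (T : EuclideanSpace ℝ (Fin d) → EuclideanSpace ℝ (Fin d)) : Prop :=
  Measurable T ∧ μ.map T = ν ∧
  ∀ S : EuclideanSpace ℝ (Fin d) → EuclideanSpace ℝ (Fin d),
    Measurable S → μ.map S = ν →
    ∫ x, ‖T x - x‖ ^ 2 ∂μ ≤ ∫ x, ‖S x - x‖ ^ 2 ∂μ

abbrev mE (d : ℕ) : MeasurableSpace (EuclideanSpace ℝ (Fin d)) := by infer_instance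

namespace NCD

local notation "E" => EuclideanSpace ℝ (Fin d)

variable {S : Slicing d} {h : List Bool → ℝ} {μ : Measure (EuclideanSpace ℝ (Fin d))}

lemma continuous_inner_const (s : EuclideanSpace ℝ (Fin d)) :
    Continuous fun x : E => ⟪s, x⟫ := continuous_const.inner continuous_id

lemma measurableSet_cell (S : Slicing d) (h : List Bool → ℝ) :
    ∀ b, MeasurableSet (cell S h b)
  | [] => MeasurableSet.univ
  | (i :: b) => by
      refine (measurableSet_cell S h b).inter ?_
      cases i
      · simpa using measurableSet_le ((continuous_inner_const _).measurable) measurable_const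
      · simpa using measurableSet_lt measurable_const ((continuous_inner_const _).measurable)

lemma cell_cons_subset (i : Bool) (b : List Bool) : cell S h (i :: b) ⊆ cell S h b :=
  Set.inter_subset_left

lemma cell_children_union (b : List Bool) :
    cell S h (false :: b) ∪ cell S h (true :: b) = cell S h b := by
  simp only [cell]
  rw [← Set.inter_union_distrib_left]
  refine Set.inter_eq_left.2 fun x _ => ?_
  by_cases hx : ⟪S.dir b, x⟫ ≤ h b
  · exact Or.inl (by simpa using hx)
  · exact Or.inr (by simpa using lt_of_not_ge hx)

lemma cell_children_disjoint (b : List Bool) :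
    Disjoint (cell S h (false :: b)) (cell S h (true :: b)) := by
  rw [Set.disjoint_iff_inter_eq_empty]
  ext x
  simp only [cell, Set.mem_inter_iff, Set.mem_setOf_eq, if_false, if_true,
    Set.mem_empty_iff_false, iff_false]
  rintro ⟨⟨-, h1⟩, -, h2⟩
  simp only [Bool.false_eq_true, if_false, if_true] at h1 h2
  exact absurd h2 (not_lt.2 h1)

lemma addr_length (S : Slicing d) (h : List Bool → ℝ) (x : E) :
    ∀ k, (addr S h x k).length = k
  | 0 => rfl
  | (k + 1) => by simp [addr, addr_length S h x k]

lemma mem_cell_addr (S : Slicing d) (h : List Bool → ℝ) (x : E) :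
    ∀ k, x ∈ cell S h (addr S h x k)
  | 0 => Set.mem_univ x
  | (k + 1) => by
      simp only [addr, cell]
      refine ⟨mem_cell_addr S h x k, ?_⟩
      by_cases hx : h (addr S h x k) < ⟪S.dir (addr S h x k), x⟫
      · simp [hx]
      · simp [hx, le_of_not_gt hx]

lemma addr_eq_of_mem_cell {x : E} : ∀ {b : List Bool}, x ∈ cell S h b →
    addr S h x b.length = b := by
  intro b
  induction b with
  | nil => intro _; rfl
  | cons i b ih =>
      intro hx
      have hxb : x ∈ cell S h b := cell_cons_subset i b hx
      have h2 := ih hxb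
      have hcond : x ∈ {y : E | if i then h b < ⟪S.dir b, y⟫ else ⟪S.dir b, y⟫ ≤ h b} :=
        hx.2
      simp only [List.length_cons, addr, h2]
      cases i
      · simp only [Set.mem_setOf_eq, if_false] at hcond
        rw [if_neg (not_lt.2 hcond)]
      · simp only [Set.mem_setOf_eq, if_true] at hcond
        rw [if_pos hcond]

lemma cell_disjoint_of_ne : ∀ {b b' : List Bool}, b.length = b'.length → b ≠ b' →
    Disjoint (cell S h b) (cell S h b') := by
  intro b
  induction b with
  | nil => intro b' hl _; cases b' with
      | nil => simp at *
      | cons i b' => simp at hl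
  | cons i b ih =>
      intro b' hl hne
      cases b' with
      | nil => simp at hl
      | cons i' b'' =>
          by_cases hbb : b = b''
          · subst hbb
            have : i ≠ i' := fun hii => hne (by rw [hii])
            cases i <;> cases i' <;> try simp at this
            · exact cell_children_disjoint b
            · exact (cell_children_disjoint b).symm
          · have : Disjoint (cell S h b) (cell S h b'') :=
              ih (by simpa using hl) hbb
            exact this.mono (cell_cons_subset _ _) (cell_cons_subset _ _)

lemma measure_cell [IsProbabilityMeasure μ] (hm : IsMedianHeights S μ h) :
    ∀ b : List Bool, μ (cell S h b) = 2⁻¹ ^ b.length := by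
  intro b
  induction b with
  | nil => simp [cell]
  | cons i b ih =>
      have hsum : μ (cell S h (false :: b)) + μ (cell S h (true :: b)) = μ (cell S h b) := by
        rw [← measure_union (cell_children_disjoint b) (measurableSet_cell S h (true :: b)),
          cell_children_union]
      have heq := hm b
      have h2 : (2 : ℝ≥0∞) * μ (cell S h (true :: b)) = 2⁻¹ ^ b.length := by
        rw [two_mul, ← ih, ← hsum, heq]
      have htrue : μ (cell S h (true :: b)) = 2⁻¹ ^ (b.length + 1) := by
        have := congrArg (fun z => (2 : ℝ≥0∞)⁻¹ * z) h2
        simp only [← mul_assoc, ENNReal.inv_mul_cancel (two_ne_zero) (ENNReal.ofNat_ne_top),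
          one_mul] at this
        rw [this, pow_succ, mul_comm]
      cases i
      · rw [List.length_cons, heq, htrue]
      · rw [List.length_cons, htrue]


section Filtration

open MeasurableSpace

lemma finite_length_eq : ∀ k : ℕ, {b : List Bool | b.length = k}.Finite
  | 0 => by
      refine Set.Finite.subset (Set.finite_singleton ([] : List Bool)) ?_
      intro b hb
      simp only [Set.mem_setOf_eq, List.length_eq_zero_iff] at hb
      simp [hb]
  | (k + 1) => by
      refine Set.Finite.subset (((Set.finite_univ (α := Bool)).prod
        (finite_length_eq k)).image (fun p : Bool × List Bool => p.1 :: p.2)) ?_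
      rintro b hb
      cases b with
      | nil => simp at hb
      | cons i b' =>
          exact ⟨⟨i, b'⟩, ⟨Set.mem_univ _, by simpa using hb⟩, rfl⟩

noncomputable def cellFiltration (S : Slicing d) (h : List Bool → ℝ) (k : ℕ) :
    MeasurableSpace (EuclideanSpace ℝ (Fin d)) :=
  MeasurableSpace.generateFrom {t | ∃ b : List Bool, b.length = k ∧ t = cell S h b}

lemma cellFiltration_le (S : Slicing d) (h : List Bool → ℝ) (k : ℕ) :
    cellFiltration S h k ≤ (inferInstance : MeasurableSpace (EuclideanSpace ℝ (Fin d))) := by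
  refine generateFrom_le ?_
  rintro t ⟨b, -, rfl⟩
  exact measurableSet_cell S h b

lemma cellFiltration_mono (S : Slicing d) (h : List Bool → ℝ) :
    Monotone (cellFiltration S h) := by
  refine monotone_nat_of_le_succ fun k => ?_
  refine generateFrom_le ?_
  rintro t ⟨b, hb, rfl⟩
  rw [← cell_children_union (S := S) (h := h) b]
  have h1 : MeasurableSet[cellFiltration S h (k+1)] (cell S h (false :: b)) :=
    MeasurableSpace.measurableSet_generateFrom ⟨false :: b, ⟨by simp [hb], rfl⟩⟩
  have h2 : MeasurableSet[cellFiltration S h (k+1)] (cell S h (true :: b)) :=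
    MeasurableSpace.measurableSet_generateFrom ⟨true :: b, ⟨by simp [hb], rfl⟩⟩
  exact h1.union h2

noncomputable def cellF (S : Slicing d) (h : List Bool → ℝ) :
    Filtration ℕ (inferInstance : MeasurableSpace (EuclideanSpace ℝ (Fin d))) :=
  ⟨cellFiltration S h, cellFiltration_mono S h, cellFiltration_le S h⟩

lemma subset_or_disjoint_of_measurable {k : ℕ} {t : Set (EuclideanSpace ℝ (Fin d))}
    (ht : MeasurableSet[cellFiltration S h k] t) :
    ∀ b : List Bool, b.length = k → cell S h b ⊆ t ∨ cell S h b ∩ t = ∅ := by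
  refine MeasurableSpace.generateFrom_induction
    (p := fun u (_ : MeasurableSet[cellFiltration S h k] u) =>
      ∀ b : List Bool, b.length = k → cell S h b ⊆ u ∨ cell S h b ∩ u = ∅)
    _ ?_ ?_ ?_ ?_ t ht
  · rintro u ⟨b', hb', rfl⟩ hum b hb
    by_cases hbb : b = b'
    · exact Or.inl (by rw [hbb])
    · exact Or.inr (Set.disjoint_iff_inter_eq_empty.1
        (cell_disjoint_of_ne (by rw [hb, hb']) hbb))
  · intro b hb
    exact Or.inr (Set.inter_empty _)
  · intro u hu ih b hb
    rcases ih b hb with h1 | h1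
    · exact Or.inr (Set.disjoint_iff_inter_eq_empty.1
        (disjoint_compl_right.mono_left h1))
    · exact Or.inl ((Set.disjoint_iff_inter_eq_empty.2 h1).subset_compl_right)
  · intro f hf ih b hb
    by_cases hex : ∃ n, cell S h b ⊆ f n
    · obtain ⟨n, hn⟩ := hex
      exact Or.inl (hn.trans (Set.subset_iUnion f n))
    · refine Or.inr ?_
      push_neg at hex
      rw [Set.inter_iUnion]
      refine Set.iUnion_eq_empty.2 fun n => ?_
      rcases ih n b hb with h1 | h1
      · exact absurd h1 (hex n)
      · exact h1

lemma eq_biUnion_cells {k : ℕ} {t : Set (EuclideanSpace ℝ (Fin d))}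
    (ht : MeasurableSet[cellFiltration S h k] t) :
    t = ⋃ b ∈ {b : List Bool | b.length = k ∧ cell S h b ⊆ t}, cell S h b := by
  ext x
  constructor
  · intro hx
    refine Set.mem_biUnion (show addr S h x k ∈ _ from ⟨addr_length S h x k, ?_⟩)
      (mem_cell_addr S h x k)
    rcases subset_or_disjoint_of_measurable ht (addr S h x k) (addr_length S h x k) with h1 | h1
    · exact h1
    · exact absurd h1 (by
        refine Set.nonempty_iff_ne_empty.1 ⟨x, mem_cell_addr S h x k, hx⟩)
  · rintro hx
    simp only [Set.mem_iUnion] at hx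
    obtain ⟨b, ⟨-, hsub⟩, hxb⟩ := hx
    exact hsub hxb

end Filtration

section Avg

variable (A : Set (EuclideanSpace ℝ (Fin d)))

noncomputable def cellAvg (S : Slicing d) (h : List Bool → ℝ)
    (μ : Measure (EuclideanSpace ℝ (Fin d))) (A : Set (EuclideanSpace ℝ (Fin d)))
    (k : ℕ) (x : EuclideanSpace ℝ (Fin d)) : ℝ :=
  2 ^ k * (μ (cell S h (addr S h x k) ∩ A)).toReal

lemma cellAvg_eq_of_mem {b : List Bool} {x : EuclideanSpace ℝ (Fin d)} (hx : x ∈ cell S h b) :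
    cellAvg S h μ A b.length x = 2 ^ b.length * (μ (cell S h b ∩ A)).toReal := by
  rw [cellAvg, addr_eq_of_mem_cell hx]

lemma measurable_cellAvg (k : ℕ) :
    Measurable[cellFiltration S h k] (cellAvg S h μ A k) := by
  intro s hs
  have : cellAvg S h μ A k ⁻¹' s =
      ⋃ b ∈ {b : List Bool | b.length = k ∧ 2 ^ k * (μ (cell S h b ∩ A)).toReal ∈ s},
        cell S h b := by
    ext x
    simp only [Set.mem_preimage, Set.mem_iUnion, Set.mem_setOf_eq]
    constructor
    · intro hx
      exact ⟨addr S h x k, ⟨addr_length S h x k, by rwa [cellAvg] at hx⟩, mem_cell_addr S h x k⟩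
    · rintro ⟨b, ⟨hb, hbs⟩, hxb⟩
      have := cellAvg_eq_of_mem (μ := μ) (A := A) hxb
      rw [hb] at this
      rwa [this]
  rw [this]
  exact MeasurableSet.biUnion (Set.to_countable _)
    (fun b hb => MeasurableSpace.measurableSet_generateFrom ⟨b, hb.1, rfl⟩)

lemma abs_cellAvg_le [IsProbabilityMeasure μ] (hm : IsMedianHeights S μ h) (k : ℕ)
    (x : EuclideanSpace ℝ (Fin d)) : |cellAvg S h μ A k x| ≤ 1 := by
  have h0 : (0:ℝ) ≤ cellAvg S h μ A k x := by
    exact mul_nonneg (by positivity) ENNReal.toReal_nonneg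
  rw [abs_of_nonneg h0]
  have hle : μ (cell S h (addr S h x k) ∩ A) ≤ 2⁻¹ ^ k := by
    have h1 : μ (cell S h (addr S h x k)) = 2⁻¹ ^ k := by
      rw [measure_cell hm, addr_length]
    rw [← h1]
    exact measure_mono Set.inter_subset_left
  have hle' : (μ (cell S h (addr S h x k) ∩ A)).toReal ≤ ((2:ℝ≥0∞)⁻¹ ^ k).toReal := by
    refine ENNReal.toReal_mono ?_ hle
    · simp [ENNReal.inv_ne_top]
  have h2 : ((2:ℝ≥0∞)⁻¹ ^ k).toReal = (2:ℝ)⁻¹ ^ k := by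
    rw [ENNReal.toReal_pow, ENNReal.toReal_inv]
    norm_num
  rw [h2] at hle'
  calc (2:ℝ) ^ k * (μ (cell S h (addr S h x k) ∩ A)).toReal
      ≤ 2 ^ k * (2:ℝ)⁻¹ ^ k := by
        exact mul_le_mul_of_nonneg_left hle' (by positivity)
    _ = 1 := by
        rw [← mul_pow]
        norm_num

lemma integrable_cellAvg [IsProbabilityMeasure μ] (hm : IsMedianHeights S μ h) (k : ℕ) :
    Integrable (cellAvg S h μ A k) μ := by
  refine Integrable.mono' (integrable_const (1:ℝ))
    (((measurable_cellAvg (A := A) k).mono (cellFiltration_le S h k) le_rfl).aestronglyMeasurable)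
    (Filter.Eventually.of_forall fun x => ?_)
  simpa [Real.norm_eq_abs] using abs_cellAvg_le A hm k x

lemma toReal_pow_inv_two (k : ℕ) : ((2:ℝ≥0∞)⁻¹ ^ k).toReal = (2:ℝ)⁻¹ ^ k := by
  rw [ENNReal.toReal_pow, ENNReal.toReal_inv]; norm_num

lemma setIntegral_cellAvg [IsProbabilityMeasure μ] (hm : IsMedianHeights S μ h)
    (hA : MeasurableSet A) (k : ℕ) {b : List Bool} (hb : b.length = k) :
    ∫ x in cell S h b, cellAvg S h μ A k x ∂μ
      = ∫ x in cell S h b, A.indicator (fun _ => (1:ℝ)) x ∂μ := by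
  have hmeas := measurableSet_cell S h b
  have hconst : ∀ x ∈ cell S h b,
      cellAvg S h μ A k x = 2 ^ k * (μ (cell S h b ∩ A)).toReal := by
    intro x hx
    have := cellAvg_eq_of_mem (μ := μ) (A := A) hx
    rw [hb] at this
    exact this
  rw [setIntegral_congr_fun hmeas hconst, setIntegral_const, setIntegral_indicator hA,
    setIntegral_const]
  rw [measureReal_def, measureReal_def, measure_cell hm b, hb]
  rw [smul_eq_mul, smul_eq_mul, mul_one, toReal_pow_inv_two, ← mul_assoc, ← mul_pow]
  norm_num

lemma cellAvg_ae_eq_condexp [IsProbabilityMeasure μ] (hm : IsMedianHeights S μ h)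
    (hA : MeasurableSet A) (k : ℕ) :
    cellAvg S h μ A k =ᵐ[μ] μ[A.indicator (fun _ => (1:ℝ)) | cellFiltration S h k] := by
  have hle := cellFiltration_le S h k
  refine ae_eq_condExp_of_forall_setIntegral_eq hle ?_ ?_ ?_ ?_
  · exact (integrable_const (1:ℝ)).indicator hA
  · intro s hs hμs
    exact (integrable_cellAvg A hm k).integrableOn
  · intro s hs hμs
    rw [eq_biUnion_cells hs]
    have hfin : {b : List Bool | b.length = k ∧ cell S h b ⊆ s}.Finite :=
      (finite_length_eq k).subset fun b hb => hb.1
    have hconv : (⋃ b ∈ {b : List Bool | b.length = k ∧ cell S h b ⊆ s}, cell S h b)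
        = ⋃ b ∈ hfin.toFinset, cell S h b := by
      ext x; simp [Set.Finite.mem_toFinset]
    rw [hconv]
    rw [integral_biUnion_finset _ (fun b _ => measurableSet_cell S h b) ?_ ?_,
      integral_biUnion_finset _ (fun b _ => measurableSet_cell S h b) ?_ ?_]
    · refine Finset.sum_congr rfl fun b hb => ?_
      simp only [Set.Finite.mem_toFinset, Set.mem_setOf_eq] at hb
      exact setIntegral_cellAvg A hm hA k hb.1
    · intro b hb b' hb' hne
      rw [Set.Finite.coe_toFinset] at hb hb'
      exact cell_disjoint_of_ne (by rw [hb.1, hb'.1]) hne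
    · intro b hb
      exact ((integrable_const (1:ℝ)).indicator hA).integrableOn
    · intro b hb b' hb' hne
      rw [Set.Finite.coe_toFinset] at hb hb'
      exact cell_disjoint_of_ne (by rw [hb.1, hb'.1]) hne
    · intro b hb
      exact (integrable_cellAvg A hm k).integrableOn
  · exact StronglyMeasurable.aestronglyMeasurable
      ((measurable_cellAvg (A := A) k).stronglyMeasurable)

end Avg


section Limit

variable [IsProbabilityMeasure μ]

noncomputable def limAvg (S : Slicing d) (h : List Bool → ℝ)
    (μ : Measure (EuclideanSpace ℝ (Fin d))) (A : Set (EuclideanSpace ℝ (Fin d))) :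
    EuclideanSpace ℝ (Fin d) → ℝ :=
  μ[A.indicator (fun _ => (1:ℝ)) | ⨆ k, cellFiltration S h k]

lemma tendsto_cellAvg (hm : IsMedianHeights S μ h) (hA : MeasurableSet A) :
    ∀ᵐ x ∂μ, Filter.Tendsto (fun k => cellAvg S h μ A k x) Filter.atTop
      (nhds (limAvg S h μ A x)) := by
  have hlevy := MeasureTheory.tendsto_ae_condExp (ℱ := cellF S h) (μ := μ)
    (A.indicator fun _ => (1:ℝ))
  have heq : ∀ᵐ x ∂μ, ∀ k, cellAvg S h μ A k x
      = (μ[A.indicator (fun _ => (1:ℝ)) | cellF S h k]) x :=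
    ae_all_iff.2 fun k => cellAvg_ae_eq_condexp A hm hA k
  filter_upwards [hlevy, heq] with x h1 h2
  have h3 : limAvg S h μ A x = (μ[A.indicator (fun _ => (1:ℝ)) | ⨆ k, cellF S h k]) x := rfl
  rw [h3]
  exact Filter.Tendsto.congr (fun k => (h2 k).symm) h1

lemma condexp_indicator_pos_on' {α : Type*} {m m0 : MeasurableSpace α} {μ : Measure α}
    [IsFiniteMeasure μ] (hle : m ≤ m0) {A : Set α} (hA : MeasurableSet[m0] A) :
    ∀ᵐ x ∂μ, x ∈ A → 0 < (μ[A.indicator (fun _ => (1:ℝ)) | m]) x := by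
  set L := μ[A.indicator (fun _ => (1:ℝ)) | m] with hL
  set Z : Set α := {x | L x ≤ 0} with hZdef
  have hZm : MeasurableSet[m] Z := by
    have hsm : StronglyMeasurable[m] L := stronglyMeasurable_condExp
    exact hsm.measurable measurableSet_Iic
  have hZ : MeasurableSet[m0] Z := hle _ hZm
  have hint : Integrable (A.indicator (fun _ => (1:ℝ))) μ :=
    (integrable_const (1:ℝ)).indicator hA
  have hset : ∫ x in Z, L x ∂μ = ∫ x in Z, A.indicator (fun _ => (1:ℝ)) x ∂μ :=
    setIntegral_condExp hle hint hZm
  have h1 : ∫ x in Z, A.indicator (fun _ => (1:ℝ)) x ∂μ = (μ (A ∩ Z)).toReal := by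
    rw [setIntegral_indicator hA, setIntegral_const]
    simp [Set.inter_comm]
    rfl
  have h2 : ∫ x in Z, L x ∂μ ≤ 0 :=
    setIntegral_nonpos hZ (fun x hx => hx)
  have h3 : (μ (A ∩ Z)).toReal = 0 := le_antisymm (by rw [← h1, ← hset]; exact h2)
    ENNReal.toReal_nonneg
  have h4 : μ (A ∩ Z) = 0 := by
    have hfin := measure_ne_top μ (A ∩ Z)
    exact ((ENNReal.toReal_eq_zero_iff _).1 h3).resolve_right hfin
  have h5 : ∀ᵐ x ∂μ, x ∉ A ∩ Z := by
    rw [← MeasureTheory.compl_mem_ae_iff] at h4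
    exact h4
  filter_upwards [h5] with x hx hxA
  by_contra hc
  push_neg at hc
  exact hx ⟨hxA, hc⟩

lemma limAvg_pos (hA : MeasurableSet A) :
    ∀ᵐ x ∂μ, x ∈ A → 0 < limAvg S h μ A x :=
  condexp_indicator_pos_on' (iSup_le fun k => cellFiltration_le S h k) hA

lemma limAvg_lt_one (hA : MeasurableSet A) :
    ∀ᵐ x ∂μ, x ∉ A → limAvg S h μ A x < 1 := by
  have hle : (⨆ k, cellFiltration S h k) ≤ mE d :=
    iSup_le fun k => cellFiltration_le S h k
  have hpos := condexp_indicator_pos_on' (μ := μ) hle hA.compl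
  have hfun : (Aᶜ.indicator (fun _ => (1:ℝ)))
      = (fun _ => (1:ℝ)) - A.indicator (fun _ => (1:ℝ)) := by
    funext x
    by_cases hx : x ∈ A <;> simp [hx]
  have hsub : μ[Aᶜ.indicator (fun _ => (1:ℝ)) | ⨆ k, cellFiltration S h k]
      =ᵐ[μ] fun x => 1 - (μ[A.indicator (fun _ => (1:ℝ)) | ⨆ k, cellFiltration S h k]) x := by
    rw [hfun]
    have hc := condExp_sub (μ := μ) (m := ⨆ k, cellFiltration S h k)
      (integrable_const (1:ℝ)) ((integrable_const (1:ℝ)).indicator hA)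
    have hone := condExp_const (μ := μ) hle (1:ℝ)
    filter_upwards [hc] with x h1
    rw [h1]
    simp only [Pi.sub_apply, congrFun hone x]
  filter_upwards [hpos, hsub] with x h1 h2 hxA
  have h3 := h1 hxA
  rw [h2] at h3
  have h4 : limAvg S h μ A x
      = (μ[A.indicator (fun _ => (1:ℝ)) | ⨆ k, cellFiltration S h k]) x := rfl
  rw [h4]
  linarith

end Limit

section Doubling

lemma cellAvg_double [IsProbabilityMeasure μ] (hm : IsMedianHeights S μ h)
    {i : Fin d} {q : ℝ} {x z : EuclideanSpace ℝ (Fin d)} (k : ℕ)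
    (hax : ∃ c : ℝ, S.dir (addr S h x k) = c • EuclideanSpace.single i (1:ℝ))
    (hunit : ‖S.dir (addr S h x k)‖ = 1)
    (hz : z ∈ cell S h (addr S h x (k+1)))
    (hstr : (x i < q ∧ q < z i) ∨ (z i < q ∧ q < x i)) :
    cellAvg S h μ {y | y i < q} (k+1) x = 2 * cellAvg S h μ {y | y i < q} k x ∨
    cellAvg S h μ {y | y i < q} (k+1) x = 2 * cellAvg S h μ {y | y i < q} k x - 1 := by
  classical
  obtain ⟨c, hc⟩ := hax
  set b := addr S h x k with hbdef
  set A : Set (EuclideanSpace ℝ (Fin d)) := {y | y i < q} with hAdef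
  have hpi : Measurable fun y : EuclideanSpace ℝ (Fin d) => y i :=
    (measurable_pi_apply i).comp (WithLp.measurable_ofLp 2 _)
  have hAmeas : MeasurableSet A := measurableSet_lt hpi measurable_const
  have hb : b.length = k := addr_length S h x k
  have habs : c = 1 ∨ c = -1 := by
    rw [hc, norm_smul, EuclideanSpace.norm_single] at hunit
    simp only [norm_one, mul_one] at hunit
    rcases (abs_eq (le_of_lt one_pos)).1 hunit with h1 | h1
    · exact Or.inl h1
    · exact Or.inr h1
  have hinner : ∀ y : EuclideanSpace ℝ (Fin d), ⟪S.dir b, y⟫ = c * y i := by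
    intro y
    rw [hc, real_inner_smul_left, EuclideanSpace.inner_single_left]
    simp
  have haddr1 : addr S h x (k+1)
      = (if h b < ⟪S.dir b, x⟫ then true else false) :: b := rfl
  have hxmem : x ∈ cell S h (addr S h x (k+1)) := mem_cell_addr S h x (k+1)
  have hcellf : cell S h (false :: b) = cell S h b ∩ {y | ⟪S.dir b, y⟫ ≤ h b} := by
    simp [cell]
  have hcellt : cell S h (true :: b) = cell S h b ∩ {y | h b < ⟪S.dir b, y⟫} := by
    simp [cell]
  have hmf : μ (cell S h (false :: b)) = 2⁻¹ ^ (k+1) := by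
    rw [measure_cell hm]; simp [hb]
  have hmt : μ (cell S h (true :: b)) = 2⁻¹ ^ (k+1) := by
    rw [measure_cell hm]; simp [hb]
  have hminq : min (x i) (z i) < q := by
    rcases hstr with ⟨h1, h2⟩ | ⟨h1, h2⟩
    · exact lt_of_le_of_lt (min_le_left _ _) h1
    · exact lt_of_le_of_lt (min_le_right _ _) h1
  have hqmax : q < max (x i) (z i) := by
    rcases hstr with ⟨h1, h2⟩ | ⟨h1, h2⟩
    · exact lt_of_lt_of_le h2 (le_max_right _ _)
    · exact lt_of_lt_of_le h2 (le_max_left _ _)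
  have case2g : cell S h (addr S h x (k+1)) ∩ A = cell S h b ∩ A →
      cellAvg S h μ A (k+1) x = 2 * cellAvg S h μ A k x := by
    intro hEq
    show (2:ℝ) ^ (k+1) * (μ (cell S h (addr S h x (k+1)) ∩ A)).toReal
      = 2 * ((2:ℝ) ^ k * (μ (cell S h (addr S h x k) ∩ A)).toReal)
    rw [hEq, ← hbdef]
    ring
  have case2g1 : ∀ other : List Bool, cell S h other ⊆ A →
      μ (cell S h other) = 2⁻¹^(k+1) →
      (cell S h b ∩ A) = cell S h other ∪ (cell S h (addr S h x (k+1)) ∩ A) →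
      Disjoint (cell S h other) (cell S h (addr S h x (k+1)) ∩ A) →
      cellAvg S h μ A (k+1) x = 2 * cellAvg S h μ A k x - 1 := by
    intro other hsub hmo hdecomp hdisj
    have hmu : μ (cell S h b ∩ A) = 2⁻¹^(k+1) + μ (cell S h (addr S h x (k+1)) ∩ A) := by
      rw [hdecomp, measure_union hdisj ((measurableSet_cell S h _).inter hAmeas), hmo]
    show (2:ℝ) ^ (k+1) * (μ (cell S h (addr S h x (k+1)) ∩ A)).toReal
      = 2 * ((2:ℝ) ^ k * (μ (cell S h (addr S h x k) ∩ A)).toReal) - 1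
    rw [← hbdef, hmu, ENNReal.toReal_add (by simp [ENNReal.inv_ne_top]) (measure_ne_top μ _),
      toReal_pow_inv_two, inv_pow]
    have h2ne : ((2:ℝ)^(k+1)) ≠ 0 := by positivity
    field_simp
    ring
  rcases habs with hc1 | hc1
  · -- c = 1 : the direction is +e i
    have hinner1 : ∀ y : EuclideanSpace ℝ (Fin d), ⟪S.dir b, y⟫ = y i := fun y => by
      rw [hinner, hc1, one_mul]
    by_cases hdd : h b < ⟪S.dir b, x⟫
    · -- true child
      have haddr2 : addr S h x (k+1) = true :: b := by rw [haddr1, if_pos hdd]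
      have hxi : h b < x i := by rwa [hinner1] at hdd
      have hzi : h b < z i := by
        have hz' := hz
        rw [haddr2, hcellt] at hz'
        have := hz'.2
        rwa [Set.mem_setOf_eq, hinner1] at this
      have hbq : h b < q := lt_of_le_of_lt (le_min hxi.le hzi.le) hminq
      right
      refine case2g1 (false :: b) ?_ hmf ?_ ?_
      · intro y hy
        rw [hcellf] at hy
        have : ⟪S.dir b, y⟫ ≤ h b := hy.2
        rw [hinner1] at this
        exact lt_of_le_of_lt this hbq
      · rw [haddr2]
        ext y
        simp only [Set.mem_inter_iff, Set.mem_union, hcellf, hcellt, Set.mem_setOf_eq]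
        constructor
        · rintro ⟨hyb, hyA⟩
          by_cases hyl : ⟪S.dir b, y⟫ ≤ h b
          · exact Or.inl ⟨hyb, hyl⟩
          · exact Or.inr ⟨⟨hyb, lt_of_not_ge hyl⟩, hyA⟩
        · rintro (⟨hyb, hyl⟩ | ⟨⟨hyb, hyl⟩, hyA⟩)
          · refine ⟨hyb, ?_⟩
            rw [hinner1] at hyl
            exact lt_of_le_of_lt hyl hbq
          · exact ⟨hyb, hyA⟩
      · rw [haddr2]
        exact (cell_children_disjoint b).mono_right Set.inter_subset_left
    · -- false child
      have haddr2 : addr S h x (k+1) = false :: b := by rw [haddr1, if_neg hdd]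
      have hxi : x i ≤ h b := by
        rw [hinner1] at hdd
        exact le_of_not_gt hdd
      have hzi : z i ≤ h b := by
        have hz' := hz
        rw [haddr2, hcellf] at hz'
        have := hz'.2
        rwa [Set.mem_setOf_eq, hinner1] at this
      have hqb : q < h b := lt_of_lt_of_le hqmax (max_le hxi hzi)
      left
      refine case2g ?_
      rw [haddr2]
      ext y
      simp only [Set.mem_inter_iff, hcellf, Set.mem_setOf_eq]
      constructor
      · rintro ⟨⟨hyb, -⟩, hyA⟩
        exact ⟨hyb, hyA⟩
      · rintro ⟨hyb, hyA⟩
        have : y i < q := hyA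
        refine ⟨⟨hyb, ?_⟩, hyA⟩
        rw [hinner1]
        exact le_of_lt (lt_trans this hqb)
  · -- c = -1 : the direction is -e i
    have hinner1 : ∀ y : EuclideanSpace ℝ (Fin d), ⟪S.dir b, y⟫ = -(y i) := fun y => by
      rw [hinner, hc1]; ring
    by_cases hdd : h b < ⟪S.dir b, x⟫
    · -- true child : y i < -(h b)
      have haddr2 : addr S h x (k+1) = true :: b := by rw [haddr1, if_pos hdd]
      have hxi : x i < -(h b) := by
        rw [hinner1] at hdd
        linarith
      have hzi : z i < -(h b) := by
        have hz' := hz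
        rw [haddr2, hcellt] at hz'
        have := hz'.2
        rw [Set.mem_setOf_eq, hinner1] at this
        linarith
      have hqu : q < -(h b) := lt_of_lt_of_le hqmax (max_le hxi.le hzi.le) |>.trans_le le_rfl
      left
      refine case2g ?_
      rw [haddr2]
      ext y
      simp only [Set.mem_inter_iff, hcellt, Set.mem_setOf_eq]
      constructor
      · rintro ⟨⟨hyb, -⟩, hyA⟩
        exact ⟨hyb, hyA⟩
      · rintro ⟨hyb, hyA⟩
        have hyq : y i < q := hyA
        refine ⟨⟨hyb, ?_⟩, hyA⟩
        rw [hinner1]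
        linarith
    · -- false child : -(h b) ≤ y i
      have haddr2 : addr S h x (k+1) = false :: b := by rw [haddr1, if_neg hdd]
      have hxi : -(h b) ≤ x i := by
        rw [hinner1] at hdd
        linarith [le_of_not_gt hdd]
      have hzi : -(h b) ≤ z i := by
        have hz' := hz
        rw [haddr2, hcellf] at hz'
        have := hz'.2
        rw [Set.mem_setOf_eq, hinner1] at this
        linarith
      have huq : -(h b) < q := lt_of_le_of_lt (le_min hxi hzi) hminq
      right
      refine case2g1 (true :: b) ?_ hmt ?_ ?_
      · intro y hy
        rw [hcellt] at hy
        have : h b < ⟪S.dir b, y⟫ := hy.2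
        rw [hinner1] at this
        have : y i < -(h b) := by linarith
        exact lt_trans this huq
      · rw [haddr2]
        ext y
        simp only [Set.mem_inter_iff, Set.mem_union, hcellf, hcellt, Set.mem_setOf_eq]
        constructor
        · rintro ⟨hyb, hyA⟩
          by_cases hyl : h b < ⟪S.dir b, y⟫
          · exact Or.inl ⟨hyb, hyl⟩
          · exact Or.inr ⟨⟨hyb, le_of_not_gt hyl⟩, hyA⟩
        · rintro (⟨hyb, hyl⟩ | ⟨⟨hyb, hyl⟩, hyA⟩)
          · refine ⟨hyb, ?_⟩
            rw [hinner1] at hyl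
            have : y i < -(h b) := by linarith
            exact lt_trans this huq
          · exact ⟨hyb, hyA⟩
      · rw [haddr2]
        exact (cell_children_disjoint b).symm.mono_right Set.inter_subset_left

end Doubling


section Uniq

open Classical in
noncomputable def decisions (S : Slicing d) (h : List Bool → ℝ)
    (x : EuclideanSpace ℝ (Fin d)) : ℕ → Bool := fun k =>
  if h (addr S h x k) < ⟪S.dir (addr S h x k), x⟫ then true else false

lemma branch_decisions (S : Slicing d) (h : List Bool → ℝ) (x : EuclideanSpace ℝ (Fin d)) :
    ∀ k, branch (decisions S h x) k = addr S h x k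
  | 0 => rfl
  | (k + 1) => by
      show decisions S h x k :: branch (decisions S h x) k = addr S h x (k+1)
      rw [branch_decisions S h x k]
      rfl

lemma straddle_null [IsProbabilityMeasure μ]
    (hrec : ∀ (σ : ℕ → Bool) (i : Fin d),
      {k : ℕ | ∃ c : ℝ, S.dir (branch σ k) = c • EuclideanSpace.single i (1 : ℝ)}.Infinite)
    (hm : IsMedianHeights S μ h)
    {s : EuclideanSpace ℝ (Fin d) → EuclideanSpace ℝ (Fin d)}
    (hs : Measurable s) (hmap : μ.map s = μ)
    (hcell : ∀ b, ∀ᵐ x ∂μ, x ∈ cell S h b → s x ∈ cell S h b)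
    (i : Fin d) (q : ℝ) :
    ∀ᵐ x ∂μ, ¬((x i < q ∧ q < s x i) ∨ (s x i < q ∧ q < x i)) := by
  classical
  set A : Set (EuclideanSpace ℝ (Fin d)) := {y | y i < q} with hAdef
  have hpi : Measurable fun y : EuclideanSpace ℝ (Fin d) => y i :=
    (measurable_pi_apply i).comp (WithLp.measurable_ofLp 2 _)
  have hAmeas : MeasurableSet A := measurableSet_lt hpi measurable_const
  have hsae : ∀ᵐ x ∂μ, ∀ b, x ∈ cell S h b → s x ∈ cell S h b := ae_all_iff.2 hcell
  have hmapae : ∀ {p : EuclideanSpace ℝ (Fin d) → Prop},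
      (∀ᵐ y ∂μ, p y) → ∀ᵐ x ∂μ, p (s x) := by
    intro p hp
    have h1 : ∀ᵐ y ∂(μ.map s), p y := by rwa [hmap]
    exact ae_of_ae_map hs.aemeasurable h1
  have ht1 := tendsto_cellAvg (A := A) hm hAmeas
  have ht2 := hmapae ht1
  have hpos := limAvg_pos (A := A) (μ := μ) (S := S) (h := h) hAmeas
  have hpos' := hmapae hpos
  have hlt := limAvg_lt_one (A := A) (μ := μ) (S := S) (h := h) hAmeas
  have hlt' := hmapae hlt
  filter_upwards [hsae, ht1, ht2, hpos, hpos', hlt, hlt']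
    with x Hcell Ht Hts Hpos Hpos' Hlt Hlt'
  intro hstr
  have hzmem : ∀ k, s x ∈ cell S h (addr S h x k) := fun k =>
    Hcell _ (mem_cell_addr S h x k)
  have haddr : ∀ k, addr S h (s x) k = addr S h x k := fun k => by
    have h1 := addr_eq_of_mem_cell (hzmem k)
    rwa [addr_length] at h1
  have hgeq : ∀ k, cellAvg S h μ A k (s x) = cellAvg S h μ A k x := fun k => by
    show (2:ℝ)^k * (μ (cell S h (addr S h (s x) k) ∩ A)).toReal
      = (2:ℝ)^k * (μ (cell S h (addr S h x k) ∩ A)).toReal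
    rw [haddr]
  have hLeq : limAvg S h μ A (s x) = limAvg S h μ A x := by
    refine tendsto_nhds_unique ?_ Ht
    exact Filter.Tendsto.congr (fun k => hgeq k) Hts
  set L := limAvg S h μ A x with hLdef
  have hL0 : 0 < L := by
    rcases hstr with ⟨h1, -⟩ | ⟨h1, -⟩
    · exact Hpos h1
    · have h2 := Hpos' h1
      rwa [hLeq] at h2
  have hL1 : L < 1 := by
    rcases hstr with ⟨-, h2⟩ | ⟨-, h2⟩
    · have h3 := Hlt' (by
        show ¬ s x i < q
        exact not_lt.2 (le_of_lt h2))
      rwa [hLeq] at h3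
    · exact Hlt (by
        show ¬ x i < q
        exact not_lt.2 (le_of_lt h2))
  have hε : 0 < min L (1 - L) / 4 := by
    have := lt_min hL0 (by linarith : (0:ℝ) < 1 - L)
    linarith
  set ε := min L (1 - L) / 4 with hεdef
  obtain ⟨N, hN⟩ := Metric.tendsto_atTop.1 Ht ε hε
  have hinf : {k : ℕ | ∃ c : ℝ, S.dir (addr S h x k)
      = c • EuclideanSpace.single i (1:ℝ)}.Infinite := by
    have h1 := hrec (decisions S h x) i
    have h2 : {k : ℕ | ∃ c : ℝ, S.dir (branch (decisions S h x) k)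
        = c • EuclideanSpace.single i (1:ℝ)}
        = {k : ℕ | ∃ c : ℝ, S.dir (addr S h x k) = c • EuclideanSpace.single i (1:ℝ)} := by
      ext k
      rw [Set.mem_setOf_eq, Set.mem_setOf_eq, branch_decisions]
    rwa [h2] at h1
  obtain ⟨k, hk, hkN⟩ := hinf.exists_gt N
  have hdb := cellAvg_double (μ := μ) hm k hk (S.unit _) (hzmem (k+1)) hstr
  have e1 := hN k (le_of_lt hkN)
  have e2 := hN (k+1) (by omega)
  rw [Real.dist_eq] at e1 e2
  have hεL : ε ≤ L / 4 := by
    rw [hεdef]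
    have := min_le_left L (1 - L)
    linarith
  have hεL' : ε ≤ (1 - L) / 4 := by
    rw [hεdef]
    have := min_le_right L (1 - L)
    linarith
  have a1 := abs_lt.1 e1
  have a2 := abs_lt.1 e2
  rcases hdb with hd | hd <;> rw [hd] at a2
  · obtain ⟨a21, a22⟩ := a2
    obtain ⟨a11, a12⟩ := a1
    linarith
  · obtain ⟨a21, a22⟩ := a2
    obtain ⟨a11, a12⟩ := a1
    linarith

lemma no_collision_id [IsProbabilityMeasure μ]
    (hrec : ∀ (σ : ℕ → Bool) (i : Fin d),
      {k : ℕ | ∃ c : ℝ, S.dir (branch σ k) = c • EuclideanSpace.single i (1 : ℝ)}.Infinite)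
    (hm : IsMedianHeights S μ h)
    {s : EuclideanSpace ℝ (Fin d) → EuclideanSpace ℝ (Fin d)}
    (hs : Measurable s) (hmap : μ.map s = μ)
    (hcell : ∀ b, ∀ᵐ x ∂μ, x ∈ cell S h b → s x ∈ cell S h b) :
    s =ᵐ[μ] id := by
  have hall : ∀ᵐ x ∂μ, ∀ (i : Fin d) (q : ℚ),
      ¬((x i < (q:ℝ) ∧ (q:ℝ) < s x i) ∨ (s x i < (q:ℝ) ∧ (q:ℝ) < x i)) := by
    rw [ae_all_iff]
    intro i
    rw [ae_all_iff]
    intro q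
    exact straddle_null hrec hm hs hmap hcell i (q:ℝ)
  filter_upwards [hall] with x hx
  show s x = x
  ext j
  by_contra hne
  rcases lt_or_gt_of_ne hne with hlt | hlt
  · obtain ⟨q, hq1, hq2⟩ := exists_rat_btwn hlt
    exact hx j q (Or.inr ⟨hq1, hq2⟩)
  · obtain ⟨q, hq1, hq2⟩ := exists_rat_btwn hlt
    exact hx j q (Or.inl ⟨hq1, hq2⟩)

end Uniq


section Hadamard

lemma hadamard_measurable (θ : Fin d → ℝ) : Measurable (hadamard θ) := by
  unfold hadamard
  exact (WithLp.measurable_toLp 2 _).comp (measurable_pi_lambda _ fun i =>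
    measurable_const.mul ((measurable_pi_apply i).comp (WithLp.measurable_ofLp 2 _)))

lemma hadamard_apply (θ : Fin d → ℝ) (x : EuclideanSpace ℝ (Fin d)) (i : Fin d) :
    hadamard θ x i = θ i * x i := rfl

lemma hadamard_comp (a bb : Fin d → ℝ) :
    hadamard a ∘ hadamard bb = hadamard (fun j => a j * bb j) := by
  funext x
  ext i
  show a i * (bb i * x i) = a i * bb i * x i
  ring

lemma hadamard_map_map (μ₀ : Measure (EuclideanSpace ℝ (Fin d))) (a bb : Fin d → ℝ) :
    (μ₀.map (hadamard bb)).map (hadamard a) = μ₀.map (hadamard (fun j => a j * bb j)) := by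
  rw [Measure.map_map (hadamard_measurable a) (hadamard_measurable bb), hadamard_comp]

lemma hadamard_preimage_cell (S : Slicing d) (r : Fin d → ℝ) (hr : ∀ j, 0 < r j)
    (iax : List Bool → Fin d) (cax : List Bool → ℝ)
    (hax : ∀ b, S.dir b = cax b • EuclideanSpace.single (iax b) (1:ℝ))
    (h' : List Bool → ℝ) :
    ∀ b, (hadamard r) ⁻¹' (cell S h' b) = cell S (fun b' => h' b' / r (iax b')) b := by
  intro b
  induction b with
  | nil => simp [cell]
  | cons j b ih =>
      have hin : ∀ y : EuclideanSpace ℝ (Fin d),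
          ⟪S.dir b, hadamard r y⟫ = r (iax b) * ⟪S.dir b, y⟫ := by
        intro y
        rw [hax b, real_inner_smul_left, real_inner_smul_left,
          EuclideanSpace.inner_single_left, EuclideanSpace.inner_single_left]
        simp only [map_one, one_mul, hadamard_apply]
        ring
      show (hadamard r) ⁻¹' (cell S h' b ∩ _) = cell S _ b ∩ _
      rw [Set.preimage_inter, ih]
      congr 1
      ext y
      simp only [Set.mem_preimage, Set.mem_setOf_eq]
      cases j
      · simp only [Bool.false_eq_true, if_false]
        rw [hin]
        rw [le_div_iff₀ (hr (iax b))]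
        constructor
        · intro h1; linarith [h1]
        · intro h1; linarith [h1]
      · simp only [if_true]
        rw [hin]
        rw [div_lt_iff₀ (hr (iax b))]
        constructor
        · intro h1; linarith [h1]
        · intro h1; linarith [h1]

end Hadamard

section MedianAe

lemma measure_inter_congr {α : Type*} {m0 : MeasurableSpace α} {μ : Measure α}
    {P Q : Set α} (hPQ : μ (P \ Q) = 0) (hQP : μ (Q \ P) = 0) (X : Set α) :
    μ (P ∩ X) = μ (Q ∩ X) := by
  have key : ∀ P' Q' : Set α, μ (P' \ Q') = 0 → μ (P' ∩ X) ≤ μ (Q' ∩ X) := by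
    intro P' Q' hPQ'
    have hsub : P' ∩ X ⊆ (Q' ∩ X) ∪ (P' \ Q') := by
      rintro y ⟨hyP, hyX⟩
      by_cases hyQ : y ∈ Q'
      · exact Or.inl ⟨hyQ, hyX⟩
      · exact Or.inr ⟨hyP, hyQ⟩
    refine le_trans (measure_mono hsub) ?_
    refine le_trans (measure_union_le _ _) ?_
    rw [hPQ', add_zero]
  exact le_antisymm (key P Q hPQ) (key Q P hQP)

lemma median_cells_ae_eq [IsProbabilityMeasure μ] {h₁ h₂ : List Bool → ℝ}
    (hm1 : IsMedianHeights S μ h₁) (hm2 : IsMedianHeights S μ h₂) :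
    ∀ b, μ (cell S h₁ b \ cell S h₂ b) = 0 ∧ μ (cell S h₂ b \ cell S h₁ b) = 0 := by
  intro b
  induction b with
  | nil => simp [cell]
  | cons j b ih =>
      -- the half-space at threshold t
      set H : ℝ → Set (EuclideanSpace ℝ (Fin d)) := fun t => {y | ⟪S.dir b, y⟫ ≤ t} with hHdef
      have hHmeas : ∀ t, MeasurableSet (H t) := fun t =>
        measurableSet_le ((continuous_inner_const _).measurable) measurable_const
      have hHmono : ∀ {t t'}, t ≤ t' → H t ⊆ H t' := by
        intro t t' htt y hy
        exact le_trans hy htt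
      have hcellf1 : cell S h₁ (false :: b) = cell S h₁ b ∩ H (h₁ b) := by simp [cell, hHdef]
      have hcellf2 : cell S h₂ (false :: b) = cell S h₂ b ∩ H (h₂ b) := by simp [cell, hHdef]
      have hk1 : μ (cell S h₁ b ∩ H (h₁ b)) = 2⁻¹ ^ (b.length + 1) := by
        rw [← hcellf1, measure_cell hm1]
        simp
      have hk2 : μ (cell S h₂ b ∩ H (h₂ b)) = 2⁻¹ ^ (b.length + 1) := by
        rw [← hcellf2, measure_cell hm2]
        simp
      -- measure of the strip inside cell₂ is zero
      have hstrip : ∀ t t', μ (cell S h₂ b ∩ H t) = 2⁻¹ ^ (b.length + 1) →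
          μ (cell S h₂ b ∩ H t') = 2⁻¹ ^ (b.length + 1) → t ≤ t' →
          μ (cell S h₂ b ∩ (H t' \ H t)) = 0 := by
        intro t t' he1 he2 htt
        have hsub : cell S h₂ b ∩ H t ⊆ cell S h₂ b ∩ H t' :=
          Set.inter_subset_inter_right _ (hHmono htt)
        have hdiff : (cell S h₂ b ∩ H t') \ (cell S h₂ b ∩ H t)
            = cell S h₂ b ∩ (H t' \ H t) := by
          ext y
          simp only [Set.mem_diff, Set.mem_inter_iff]
          tauto
        rw [← hdiff]
        rw [measure_diff hsub (((measurableSet_cell S h₂ b).inter (hHmeas t)).nullMeasurableSet)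
          (by rw [he1]; simp [ENNReal.inv_ne_top])]
        rw [he1, he2, tsub_self]
      have htrans : μ (cell S h₂ b ∩ H (h₁ b)) = 2⁻¹ ^ (b.length + 1) := by
        rw [measure_inter_congr ih.2 ih.1 (H (h₁ b))]
        exact hk1
      -- the symmetric strip between the two thresholds, inside cell₂, is null
      have hstrip2 : μ (cell S h₂ b ∩ ((H (h₁ b) \ H (h₂ b)) ∪ (H (h₂ b) \ H (h₁ b)))) = 0 := by
        rcases le_total (h₁ b) (h₂ b) with hle | hle
        · have h1 : H (h₁ b) \ H (h₂ b) = ∅ := by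
            rw [Set.diff_eq_empty]
            exact hHmono hle
          rw [h1, Set.empty_union]
          exact hstrip _ _ htrans hk2 hle
        · have h1 : H (h₂ b) \ H (h₁ b) = ∅ := by
            rw [Set.diff_eq_empty]
            exact hHmono hle
          rw [h1, Set.union_empty]
          exact hstrip _ _ hk2 htrans hle
      set Sb := cell S h₂ b ∩ ((H (h₁ b) \ H (h₂ b)) ∪ (H (h₂ b) \ H (h₁ b))) with hSbdef
      have big : μ ((cell S h₁ b \ cell S h₂ b) ∪ ((cell S h₂ b \ cell S h₁ b) ∪ Sb)) = 0 :=
        measure_union_null ih.1 (measure_union_null ih.2 hstrip2)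
      have hsub1 : cell S h₁ (j :: b) \ cell S h₂ (j :: b) ⊆
          (cell S h₁ b \ cell S h₂ b) ∪ ((cell S h₂ b \ cell S h₁ b) ∪ Sb) := by
        rintro y ⟨hy1, hy2⟩
        have hy1b : y ∈ cell S h₁ b := hy1.1
        by_cases hycell2 : y ∈ cell S h₂ b
        · refine Or.inr (Or.inr ⟨hycell2, ?_⟩)
          have hcond1 := hy1.2
          have hcond2 : y ∉ {y : EuclideanSpace ℝ (Fin d) |
              if j = true then h₂ b < ⟪S.dir b, y⟫ else ⟪S.dir b, y⟫ ≤ h₂ b} :=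
            fun hc => hy2 ⟨hycell2, hc⟩
          cases j
          · simp only [Set.mem_setOf_eq, Bool.false_eq_true, if_false] at hcond1 hcond2
            exact Or.inl ⟨hcond1, hcond2⟩
          · simp only [Set.mem_setOf_eq, if_true] at hcond1 hcond2
            exact Or.inr ⟨le_of_not_gt hcond2, fun hc => (not_le.2 hcond1) hc⟩
        · exact Or.inl ⟨hy1b, hycell2⟩
      have hsub2 : cell S h₂ (j :: b) \ cell S h₁ (j :: b) ⊆
          (cell S h₁ b \ cell S h₂ b) ∪ ((cell S h₂ b \ cell S h₁ b) ∪ Sb) := by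
        rintro y ⟨hy1, hy2⟩
        have hy2b : y ∈ cell S h₂ b := hy1.1
        by_cases hycell1 : y ∈ cell S h₁ b
        · refine Or.inr (Or.inr ⟨hy2b, ?_⟩)
          have hcond1 := hy1.2
          have hcond2 : y ∉ {y : EuclideanSpace ℝ (Fin d) |
              if j = true then h₁ b < ⟪S.dir b, y⟫ else ⟪S.dir b, y⟫ ≤ h₁ b} :=
            fun hc => hy2 ⟨hycell1, hc⟩
          cases j
          · simp only [Set.mem_setOf_eq, Bool.false_eq_true, if_false] at hcond1 hcond2
            exact Or.inr ⟨hcond1, hcond2⟩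
          · simp only [Set.mem_setOf_eq, if_true] at hcond1 hcond2
            exact Or.inl ⟨le_of_not_gt hcond2, fun hc => (not_le.2 hcond1) hc⟩
        · exact Or.inr (Or.inl ⟨hy2b, hycell1⟩)
      exact ⟨measure_mono_null hsub1 big, measure_mono_null hsub2 big⟩

end MedianAe


section Analysis

lemma inner_eq_sum (x y : EuclideanSpace ℝ (Fin d)) : ⟪x, y⟫ = ∑ j, x j * y j := by
  rw [PiLp.inner_apply]; simp [RCLike.inner_apply, mul_comm]

lemma norm_sq_eq (x : EuclideanSpace ℝ (Fin d)) : ‖x‖^2 = ∑ j, (x j)^2 := by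
  rw [← real_inner_self_eq_norm_sq, PiLp.inner_apply]; simp [RCLike.inner_apply, pow_two]

lemma coord_sq_le (x : EuclideanSpace ℝ (Fin d)) (j : Fin d) : (x j)^2 ≤ ‖x‖^2 := by
  rw [norm_sq_eq]
  exact Finset.single_le_sum (f := fun j => (x j)^2) (fun i _ => sq_nonneg _) (Finset.mem_univ j)

lemma hadamard_continuous (θ : Fin d → ℝ) : Continuous (hadamard θ) := by
  unfold hadamard
  refine (PiLp.continuous_toLp 2 _).comp (continuous_pi fun i => ?_)
  exact continuous_const.mul (PiLp.continuous_apply 2 _ i)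

lemma bounded_carrier_map (μ₀ : Measure (EuclideanSpace ℝ (Fin d)))
    {K : Set (EuclideanSpace ℝ (Fin d))} (hKc : IsCompact K) (hK0 : μ₀ Kᶜ = 0)
    (θ : Fin d → ℝ) : ∃ M : ℝ, ∀ᵐ x ∂(μ₀.map (hadamard θ)), ‖x‖ ≤ M := by
  obtain ⟨M, hM⟩ := ((hKc.image (hadamard_continuous θ)).isBounded).exists_norm_le
  refine ⟨M, ?_⟩
  have h1 : μ₀.map (hadamard θ) ((hadamard θ '' K)ᶜ) = 0 := by
    rw [Measure.map_apply (hadamard_measurable θ)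
      ((hKc.image (hadamard_continuous θ)).isClosed.measurableSet.compl)]
    refine measure_mono_null ?_ hK0
    intro x hx
    simp only [Set.mem_preimage, Set.mem_compl_iff] at hx ⊢
    intro hxK
    exact hx (Set.mem_image_of_mem _ hxK)
  have h2 : ∀ᵐ x ∂(μ₀.map (hadamard θ)), x ∈ hadamard θ '' K := by
    rw [MeasureTheory.ae_iff]
    exact h1
  filter_upwards [h2] with x hx
  exact hM x hx

lemma bounded_carrier_self (μ₀ : Measure (EuclideanSpace ℝ (Fin d)))
    {K : Set (EuclideanSpace ℝ (Fin d))} (hKc : IsCompact K) (hK0 : μ₀ Kᶜ = 0) :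
    ∃ M : ℝ, ∀ᵐ x ∂μ₀, ‖x‖ ≤ M := by
  obtain ⟨M, hM⟩ := hKc.isBounded.exists_norm_le
  refine ⟨M, ?_⟩
  have h2 : ∀ᵐ x ∂μ₀, x ∈ K := by
    rw [MeasureTheory.ae_iff]
    exact hK0
  filter_upwards [h2] with x hx
  exact hM x hx

lemma integrable_of_ae_bound {μ : Measure (EuclideanSpace ℝ (Fin d))} [IsFiniteMeasure μ]
    {f : EuclideanSpace ℝ (Fin d) → ℝ} (hf : AEStronglyMeasurable f μ) {M : ℝ}
    (hb : ∀ᵐ x ∂μ, |f x| ≤ M) : Integrable f μ :=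
  Integrable.mono' (integrable_const M) hf
    (by filter_upwards [hb] with x hx; simpa [Real.norm_eq_abs] using hx)

lemma young_scalar {r a bb : ℝ} (hr : 0 < r) : a * bb ≤ r * a^2/2 + bb^2/(2*r) := by
  rw [div_add_div _ _ (by norm_num : (2:ℝ) ≠ 0) (by positivity : 2*r ≠ 0)]
  rw [le_div_iff₀ (by positivity : (0:ℝ) < 2*(2*r))]
  nlinarith [sq_nonneg (r*a - bb)]

lemma optimal_mono {μ ν : Measure (EuclideanSpace ℝ (Fin d))}
    [IsProbabilityMeasure μ] [IsProbabilityMeasure ν]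
    (r : Fin d → ℝ) (hr : ∀ j, 0 < r j) (hmapT : μ.map (hadamard r) = ν)
    {Mμ Mν : ℝ} (hbμ : ∀ᵐ x ∂μ, ‖x‖ ≤ Mμ) (hbν : ∀ᵐ y ∂ν, ‖y‖ ≤ Mν)
    (Smap : EuclideanSpace ℝ (Fin d) → EuclideanSpace ℝ (Fin d))
    (hS : Measurable Smap) (hSmap : μ.map Smap = ν) :
    ∫ x, ‖hadamard r x - x‖^2 ∂μ ≤ ∫ x, ‖Smap x - x‖^2 ∂μ := by
  have hTc : Continuous (hadamard r) := hadamard_continuous r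
  have hTm : Measurable (hadamard r) := hadamard_measurable r
  set φ : EuclideanSpace ℝ (Fin d) → ℝ := fun x => ∑ j, r j * (x j)^2/2 with hφdef
  set ψ : EuclideanSpace ℝ (Fin d) → ℝ := fun y => ∑ j, (y j)^2/(2 * r j) with hψdef
  have hφc : Continuous φ := by
    refine continuous_finset_sum _ fun j _ => ?_
    exact ((continuous_const.mul ((PiLp.continuous_apply 2 _ j).pow 2)).div_const 2)
  have hψc : Continuous ψ := by
    refine continuous_finset_sum _ fun j _ => ?_
    exact (((PiLp.continuous_apply 2 _ j).pow 2).div_const _)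
  have hn2c : Continuous fun y : EuclideanSpace ℝ (Fin d) => ‖y‖^2 :=
    (continuous_norm.pow 2)
  -- integrability of the basic functions
  have hsq : ∀ {x : EuclideanSpace ℝ (Fin d)} {M : ℝ}, ‖x‖ ≤ M → ‖x‖^2 ≤ M^2 := by
    intro x M hx
    have h0 := norm_nonneg x
    nlinarith
  have Iμ2 : Integrable (fun x => ‖x‖^2) μ :=
    integrable_of_ae_bound hn2c.aestronglyMeasurable
      (by filter_upwards [hbμ] with x hx; rw [abs_of_nonneg (by positivity)]; exact hsq hx)
  have Iν2 : Integrable (fun y : EuclideanSpace ℝ (Fin d) => ‖y‖^2) ν :=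
    integrable_of_ae_bound hn2c.aestronglyMeasurable
      (by filter_upwards [hbν] with x hx; rw [abs_of_nonneg (by positivity)]; exact hsq hx)
  have Iφ : Integrable φ μ := by
    refine integrable_of_ae_bound hφc.aestronglyMeasurable
      (M := ∑ j, r j * Mμ^2/2) ?_
    filter_upwards [hbμ] with x hx
    have hnn : (0:ℝ) ≤ φ x := Finset.sum_nonneg fun j _ =>
      div_nonneg (mul_nonneg (hr j).le (sq_nonneg _)) (by norm_num)
    rw [abs_of_nonneg hnn]
    refine Finset.sum_le_sum fun j _ => ?_
    have h1 : (x j)^2 ≤ Mμ^2 := le_trans (coord_sq_le x j) (hsq hx)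
    have h2 := (hr j).le
    nlinarith
  have Iψν : Integrable ψ ν := by
    refine integrable_of_ae_bound hψc.aestronglyMeasurable
      (M := ∑ j, Mν^2/(2 * r j)) ?_
    filter_upwards [hbν] with y hy
    have hnn : (0:ℝ) ≤ ψ y := Finset.sum_nonneg fun j _ =>
      div_nonneg (sq_nonneg _) (by nlinarith [hr j])
    rw [abs_of_nonneg hnn]
    refine Finset.sum_le_sum fun j _ => ?_
    have h1 : (y j)^2 ≤ Mν^2 := le_trans (coord_sq_le y j) (hsq hy)
    have h2 := hr j
    gcongr
  have hcompI : ∀ g : EuclideanSpace ℝ (Fin d) → ℝ, Continuous g → Integrable g ν →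
      ∀ W : EuclideanSpace ℝ (Fin d) → EuclideanSpace ℝ (Fin d), Measurable W →
        μ.map W = ν → Integrable (fun x => g (W x)) μ := by
    intro g hg hgν W hWm hWmap
    have h1 : Integrable g (μ.map W) := by rwa [hWmap]
    exact (integrable_map_measure hg.aestronglyMeasurable hWm.aemeasurable).1 h1
  have IψS : Integrable (fun x => ψ (Smap x)) μ := hcompI ψ hψc Iψν Smap hS hSmap
  have IψT : Integrable (fun x => ψ (hadamard r x)) μ := hcompI ψ hψc Iψν _ hTm hmapT
  have IS2 : Integrable (fun x => ‖Smap x‖^2) μ := hcompI _ hn2c Iν2 Smap hS hSmap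
  have IT2 : Integrable (fun x => ‖hadamard r x‖^2) μ := hcompI _ hn2c Iν2 _ hTm hmapT
  have hinnerW : ∀ W : EuclideanSpace ℝ (Fin d) → EuclideanSpace ℝ (Fin d), Measurable W →
      Integrable (fun x => ‖W x‖^2) μ → Integrable (fun x => ⟪x, W x⟫) μ := by
    intro W hWm hW2
    refine Integrable.mono' ((Iμ2.add hW2).div_const 2)
      ((measurable_id.inner hWm).aestronglyMeasurable) ?_
    refine Filter.Eventually.of_forall fun x => ?_
    rw [Real.norm_eq_abs]
    refine le_trans (abs_real_inner_le_norm _ _) ?_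
    simp only [Pi.add_apply]
    have h0 := sq_nonneg (‖x‖ - ‖W x‖)
    have h1 := norm_nonneg x
    have h2 := norm_nonneg (W x)
    nlinarith
  have IiS := hinnerW Smap hS IS2
  have IiT := hinnerW _ hTm IT2
  have hmapint : ∀ g : EuclideanSpace ℝ (Fin d) → ℝ, Continuous g →
      ∀ W : EuclideanSpace ℝ (Fin d) → EuclideanSpace ℝ (Fin d), Measurable W →
        μ.map W = ν → ∫ x, g (W x) ∂μ = ∫ y, g y ∂ν := by
    intro g hg W hWm hWmap
    rw [← hWmap, integral_map hWm.aemeasurable hg.aestronglyMeasurable]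
  have hYoung : ∀ x, ⟪x, Smap x⟫ ≤ φ x + ψ (Smap x) := by
    intro x
    rw [inner_eq_sum, ← Finset.sum_add_distrib]
    exact Finset.sum_le_sum fun j _ => young_scalar (hr j)
  have hEq : ∀ x, ⟪x, hadamard r x⟫ = φ x + ψ (hadamard r x) := by
    intro x
    rw [inner_eq_sum, ← Finset.sum_add_distrib]
    refine Finset.sum_congr rfl fun j _ => ?_
    have h0 : r j ≠ 0 := ne_of_gt (hr j)
    rw [hadamard_apply]
    field_simp
    ring
  have hkey : ∫ x, ⟪x, Smap x⟫ ∂μ ≤ ∫ x, ⟪x, hadamard r x⟫ ∂μ := by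
    have h1 : ∫ x, ⟪x, Smap x⟫ ∂μ ≤ ∫ x, (φ x + ψ (Smap x)) ∂μ :=
      integral_mono IiS (Iφ.add IψS) hYoung
    have h2 : ∫ x, (φ x + ψ (Smap x)) ∂μ = ∫ x, φ x ∂μ + ∫ x, ψ (Smap x) ∂μ :=
      integral_add Iφ IψS
    have h3 : ∫ x, ψ (Smap x) ∂μ = ∫ x, ψ (hadamard r x) ∂μ := by
      rw [hmapint ψ hψc Smap hS hSmap, hmapint ψ hψc _ hTm hmapT]
    have h4 : ∫ x, (φ x + ψ (hadamard r x)) ∂μ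
        = ∫ x, φ x ∂μ + ∫ x, ψ (hadamard r x) ∂μ := integral_add Iφ IψT
    have h5 : ∫ x, ⟪x, hadamard r x⟫ ∂μ = ∫ x, (φ x + ψ (hadamard r x)) ∂μ :=
      integral_congr_ae (Filter.Eventually.of_forall hEq)
    linarith
  have hexp : ∀ W : EuclideanSpace ℝ (Fin d) → EuclideanSpace ℝ (Fin d),
      Integrable (fun x => ‖W x‖^2) μ → Integrable (fun x => ⟪x, W x⟫) μ →
      ∫ x, ‖W x - x‖^2 ∂μ
        = ∫ x, ‖W x‖^2 ∂μ - 2*∫ x, ⟪x, W x⟫ ∂μ + ∫ x, ‖x‖^2 ∂μ := by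
    intro W hW2 hWi
    have hpt : ∀ x, ‖W x - x‖^2 = ‖W x‖^2 - 2*⟪x, W x⟫ + ‖x‖^2 := by
      intro x
      rw [norm_sub_sq_real, real_inner_comm]
    rw [integral_congr_ae (Filter.Eventually.of_forall hpt)]
    have hfint : Integrable (fun x => ‖W x‖^2 - 2*⟪x, W x⟫) μ := hW2.sub (hWi.const_mul 2)
    have hgint : Integrable (fun x => 2*⟪x, W x⟫) μ := hWi.const_mul 2
    rw [integral_add hfint Iμ2, integral_sub hW2 hgint, integral_const_mul]
  have hS2T2 : ∫ x, ‖Smap x‖^2 ∂μ = ∫ x, ‖hadamard r x‖^2 ∂μ := by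
    rw [hmapint _ hn2c Smap hS hSmap, hmapint _ hn2c _ hTm hmapT]
  rw [hexp _ IT2 IiT, hexp Smap IS2 IiS]
  linarith

lemma cost_formula (μ₀ : Measure (EuclideanSpace ℝ (Fin d))) [IsProbabilityMeasure μ₀]
    {M : ℝ} (hb : ∀ᵐ x ∂μ₀, ‖x‖ ≤ M) (θ θ' : Fin d → ℝ) (hθ : ∀ j, 0 < θ j) :
    ∫ x, ‖hadamard (fun j => θ' j / θ j) x - x‖^2 ∂(μ₀.map (hadamard θ))
      = ∑ j, (∫ x, (x j)^2 ∂μ₀) * (θ j - θ' j)^2 := by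
  set r : Fin d → ℝ := fun j => θ' j / θ j with hrdef
  have hcont : Continuous fun x : EuclideanSpace ℝ (Fin d) => ‖hadamard r x - x‖^2 :=
    (((hadamard_continuous r).sub continuous_id).norm.pow 2)
  rw [integral_map (hadamard_measurable θ).aemeasurable hcont.aestronglyMeasurable]
  have hpt : ∀ x : EuclideanSpace ℝ (Fin d),
      ‖hadamard r (hadamard θ x) - hadamard θ x‖^2 = ∑ j, (θ j - θ' j)^2 * (x j)^2 := by
    intro x
    rw [norm_sq_eq]
    refine Finset.sum_congr rfl fun j _ => ?_
    have h1 : (hadamard r (hadamard θ x) - hadamard θ x) j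
        = r j * (θ j * x j) - θ j * x j := by
      simp [hadamard_apply]
    rw [h1, hrdef]
    have h0 : θ j ≠ 0 := ne_of_gt (hθ j)
    field_simp
    ring
  rw [integral_congr_ae (Filter.Eventually.of_forall hpt)]
  have hintj : ∀ j : Fin d, Integrable (fun x : EuclideanSpace ℝ (Fin d)
      => (θ j - θ' j)^2 * (x j)^2) μ₀ := by
    intro j
    have hc : Continuous fun x : EuclideanSpace ℝ (Fin d) => (θ j - θ' j)^2 * (x j)^2 :=
      continuous_const.mul ((PiLp.continuous_apply 2 _ j).pow 2)
    refine integrable_of_ae_bound hc.aestronglyMeasurable (M := (θ j - θ' j)^2 * M^2) ?_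
    filter_upwards [hb] with x hx
    rw [abs_of_nonneg (by positivity)]
    have h1 : (x j)^2 ≤ ‖x‖^2 := coord_sq_le x j
    have h2 : ‖x‖^2 ≤ M^2 := by nlinarith [norm_nonneg x]
    nlinarith [sq_nonneg (θ j - θ' j)]
  rw [integral_finset_sum _ (fun j _ => hintj j)]
  refine Finset.sum_congr rfl fun j _ => ?_
  rw [integral_const_mul]
  ring

end Analysis


section Assemble

def IsNoCollisionMap' (S : Slicing d) (hμ hν : List Bool → ℝ)
    (μ ν : Measure (EuclideanSpace ℝ (Fin d)))
    (t : EuclideanSpace ℝ (Fin d) → EuclideanSpace ℝ (Fin d)) : Prop :=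
  Measurable t ∧ μ.map t = ν ∧ ∀ b, ∀ᵐ x ∂μ, x ∈ cell S hμ b → t x ∈ cell S hν b

lemma part1 (μ₀ : Measure (EuclideanSpace ℝ (Fin d))) [IsProbabilityMeasure μ₀]
    (θ θ' : Fin d → ℝ) (hθ : ∀ j, 0 < θ j) (hθ' : ∀ j, 0 < θ' j)
    (S : Slicing d)
    (haxis : ∀ b, ∃ (i : Fin d) (c : ℝ), S.dir b = c • EuclideanSpace.single i (1 : ℝ))
    (hrec : ∀ (σ : ℕ → Bool) (i : Fin d),
      {k : ℕ | ∃ c : ℝ, S.dir (branch σ k) = c • EuclideanSpace.single i (1 : ℝ)}.Infinite)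
    (hdθ hdθ' : List Bool → ℝ)
    (hm : IsMedianHeights S (μ₀.map (hadamard θ)) hdθ)
    (hm' : IsMedianHeights S (μ₀.map (hadamard θ')) hdθ')
    (t : EuclideanSpace ℝ (Fin d) → EuclideanSpace ℝ (Fin d))
    (ht : IsNoCollisionMap' S hdθ hdθ' (μ₀.map (hadamard θ)) (μ₀.map (hadamard θ')) t) :
    t =ᵐ[μ₀.map (hadamard θ)] hadamard (fun j => θ' j / θ j) := by
  classical
  obtain ⟨htm, htmap, htcell⟩ := ht
  choose iax cax hax using haxis
  haveI hPμ : IsProbabilityMeasure (μ₀.map (hadamard θ)) :=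
    Measure.isProbabilityMeasure_map (hadamard_measurable θ).aemeasurable
  haveI hPν : IsProbabilityMeasure (μ₀.map (hadamard θ')) :=
    Measure.isProbabilityMeasure_map (hadamard_measurable θ').aemeasurable
  set μ := μ₀.map (hadamard θ) with hμdef
  set ν := μ₀.map (hadamard θ') with hνdef
  set r : Fin d → ℝ := fun j => θ' j / θ j with hrdef
  set rinv : Fin d → ℝ := fun j => θ j / θ' j with hrinvdef
  have hrpos : ∀ j, 0 < r j := fun j => div_pos (hθ' j) (hθ j)
  have hfun1 : (fun j => r j * θ j) = θ' := by
    funext j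
    exact div_mul_cancel₀ (θ' j) (ne_of_gt (hθ j))
  have hmapT : μ.map (hadamard r) = ν := by
    rw [hμdef, hadamard_map_map, hfun1]
  have hinv : ∀ y : EuclideanSpace ℝ (Fin d), hadamard r (hadamard rinv y) = y := by
    intro y
    ext i
    show r i * (rinv i * y i) = y i
    rw [hrdef, hrinvdef]
    have h1 : θ i ≠ 0 := ne_of_gt (hθ i)
    have h2 : θ' i ≠ 0 := ne_of_gt (hθ' i)
    field_simp
  set s : EuclideanSpace ℝ (Fin d) → EuclideanSpace ℝ (Fin d) :=
    fun x => hadamard rinv (t x) with hsdef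
  have hsm : Measurable s := (hadamard_measurable rinv).comp htm
  have hsmap : μ.map s = μ := by
    have h1 : μ.map s = (μ.map t).map (hadamard rinv) :=
      (Measure.map_map (hadamard_measurable rinv) htm).symm
    have hfun2 : (fun j => rinv j * θ' j) = θ := by
      funext j
      exact div_mul_cancel₀ (θ j) (ne_of_gt (hθ' j))
    rw [h1, htmap, hνdef, hadamard_map_map, hfun2]
  set h₂ : List Bool → ℝ := fun b => hdθ' b / r (iax b) with hh₂
  have hpre : ∀ b, (hadamard r) ⁻¹' (cell S hdθ' b) = cell S h₂ b :=
    hadamard_preimage_cell S r hrpos iax cax hax hdθ'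
  have hm₂ : IsMedianHeights S μ h₂ := by
    intro b
    have e1 : ∀ b', μ (cell S h₂ b') = ν (cell S hdθ' b') := by
      intro b'
      rw [← hpre, ← hmapT,
        Measure.map_apply (hadamard_measurable r) (measurableSet_cell S hdθ' b')]
    rw [e1, e1, hm' b]
  have hnull : ∀ b, μ (cell S h₂ b \ cell S hdθ b) = 0 := fun b =>
    (median_cells_ae_eq hm₂ hm b).1
  have hscell : ∀ b, ∀ᵐ x ∂μ, x ∈ cell S hdθ b → s x ∈ cell S hdθ b := by
    intro b
    have h1 := htcell b
    have hNmeas : MeasurableSet (cell S h₂ b \ cell S hdθ b) :=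
      (measurableSet_cell _ _ _).diff (measurableSet_cell _ _ _)
    have h2 : μ (s ⁻¹' (cell S h₂ b \ cell S hdθ b)) = 0 := by
      rw [← Measure.map_apply hsm hNmeas, hsmap]
      exact hnull b
    have h3 : ∀ᵐ x ∂μ, s x ∉ (cell S h₂ b \ cell S hdθ b) := by
      rw [MeasureTheory.ae_iff]
      simp only [not_not]
      exact h2
    filter_upwards [h1, h3] with x hx1 hx3 hxb
    have h4 : t x ∈ cell S hdθ' b := hx1 hxb
    have h5 : s x ∈ cell S h₂ b := by
      rw [← hpre]
      show hadamard r (s x) ∈ cell S hdθ' b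
      rw [hsdef]
      rw [hinv (t x)]
      exact h4
    by_contra hc
    exact hx3 ⟨h5, hc⟩
  have hid := no_collision_id (μ := μ) hrec hm hsm hsmap hscell
  filter_upwards [hid] with x hx
  have h6 : t x = hadamard r (s x) := by
    rw [hsdef, hinv (t x)]
  have hx' : s x = x := hx
  rw [h6, hx']

end Assemble

end NCD

/-- For `μ₀ ∈ 𝒦`, `μ_θ = (θ ⊙ x)♯μ₀` with `θ ∈ ℝ₊ᵈ`, and an axis-aligned slicing schedule:
the no-collision map from `μ_θ` to `μ_{θ'}` is the coordinatewise dilation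
`x_j ↦ (θ'_j/θ_j) x_j` a.e., it coincides with the optimal transport map, and
`W_{𝒮,2}²(μ_θ, μ_{θ'}) = Σ_j c_j² (θ_j − θ'_j)²` with `c_j² = ∫ x_j² dμ₀`. -/
theorem no_collision_dilation
    (μ₀ : Measure (EuclideanSpace ℝ (Fin d))) (hK : MemK μ₀)
    (θ θ' : Fin d → ℝ) (hθ : ∀ j, 0 < θ j) (hθ' : ∀ j, 0 < θ' j)
    (S : Slicing d)
    (haxis : ∀ b, ∃ (i : Fin d) (c : ℝ), S.dir b = c • EuclideanSpace.single i (1 : ℝ))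
    (hrec : ∀ (σ : ℕ → Bool) (i : Fin d),
      {k : ℕ | ∃ c : ℝ, S.dir (branch σ k) = c • EuclideanSpace.single i (1 : ℝ)}.Infinite)
    (hdθ hdθ' : List Bool → ℝ)
    (hm : IsMedianHeights S (μ₀.map (hadamard θ)) hdθ)
    (hm' : IsMedianHeights S (μ₀.map (hadamard θ')) hdθ') :
    (∀ t, IsNoCollisionMap S hdθ hdθ' (μ₀.map (hadamard θ)) (μ₀.map (hadamard θ')) t →
      t =ᵐ[μ₀.map (hadamard θ)] hadamard (fun j => θ' j / θ j)) ∧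
    IsOptimalMap (μ₀.map (hadamard θ)) (μ₀.map (hadamard θ'))
      (hadamard fun j => θ' j / θ j) ∧
    (∀ t, IsNoCollisionMap S hdθ hdθ' (μ₀.map (hadamard θ)) (μ₀.map (hadamard θ')) t →
      ∫ x, ‖t x - x‖ ^ 2 ∂(μ₀.map (hadamard θ)) =
        ∑ j, (∫ x, (x j) ^ 2 ∂μ₀) * (θ j - θ' j) ^ 2) := by
  obtain ⟨hP, hac, K, hKc, hK0, hKfr, cc, CC, hcc, hbound⟩ := hK
  haveI := hP
  haveI hPμ : IsProbabilityMeasure (μ₀.map (hadamard θ)) :=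
    Measure.isProbabilityMeasure_map (NCD.hadamard_measurable θ).aemeasurable
  haveI hPν : IsProbabilityMeasure (μ₀.map (hadamard θ')) :=
    Measure.isProbabilityMeasure_map (NCD.hadamard_measurable θ').aemeasurable
  have hfun1 : (fun j => (θ' j / θ j) * θ j) = θ' := by
    funext j
    exact div_mul_cancel₀ _ (ne_of_gt (hθ j))
  have hmapT : (μ₀.map (hadamard θ)).map (hadamard fun j => θ' j / θ j)
      = μ₀.map (hadamard θ') := by
    rw [NCD.hadamard_map_map, hfun1]
  have hpart1 : ∀ t,
      IsNoCollisionMap S hdθ hdθ' (μ₀.map (hadamard θ)) (μ₀.map (hadamard θ')) t →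
      t =ᵐ[μ₀.map (hadamard θ)] hadamard (fun j => θ' j / θ j) := by
    intro t ht
    exact NCD.part1 μ₀ θ θ' hθ hθ' S haxis hrec hdθ hdθ' hm hm' t ⟨ht.1, ht.2.1, ht.2.2⟩
  refine ⟨hpart1, ⟨NCD.hadamard_measurable _, hmapT, ?_⟩, ?_⟩
  · intro Smap hSm hSmap
    obtain ⟨Mμ, hbμ⟩ := NCD.bounded_carrier_map μ₀ hKc hK0 θ
    obtain ⟨Mν, hbν⟩ := NCD.bounded_carrier_map μ₀ hKc hK0 θ'
    exact NCD.optimal_mono _ (fun j => div_pos (hθ' j) (hθ j)) hmapT hbμ hbν Smap hSm hSmap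
  · intro t ht
    have h1 := hpart1 t ht
    have h2 : ∫ x, ‖t x - x‖ ^ 2 ∂(μ₀.map (hadamard θ))
        = ∫ x, ‖hadamard (fun j => θ' j / θ j) x - x‖ ^ 2 ∂(μ₀.map (hadamard θ)) := by
      refine integral_congr_ae ?_
      filter_upwards [h1] with x hx
      rw [hx]
    obtain ⟨M, hbμ₀⟩ := NCD.bounded_carrier_self μ₀ hKc hK0
    rw [h2, NCD.cost_formula μ₀ hbμ₀ θ θ' hθ]
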